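/- Let V be a subgroup of (ℝ_{>0})^n whose logarithmic image is a full lattice in the trace-zero hyperplane, and set 𝒞 = {x ∈ (ℝ_{>0})^n : Tr(x) < Tr(vx) for all v ∈ V, v ≠ 1}. Then: (a) the translates v𝒞, v ∈ V, are pairwise disjoint; (b) there exists δ > 0 such that x_i ≥ δ·Tr(x) for every x ∈ 𝒞 and every 1 ≤ i ≤ n; (c) the set (ℝ_{>0})^n ∖ ⋃_{v∈V} v𝒞 is contained in the countable union of the hyperplanes {x : Tr(vx) = Tr(wx)}, v ≠ w ∈ V, hence has Lebesgue measure zero. -/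

import Mathlib

set_option maxHeartbeats 1000000


open scoped BigOperators

/-- let `V ⊂ (ℝ_{>0})^n` be a subgroup (parametrized as the image of a
multiplicative map `v` on `ℤ^{n-1}`) whose logarithmic image is a full lattice of rank
`n-1` in the trace-zero hyperplane, and let
`𝒞 = {x ∈ (ℝ_{>0})^n : Tr x < Tr(wx) ∀ w ∈ V, w ≠ 1}`. Then:
(a) the translates `w𝒞`, `w ∈ V`, are pairwise disjoint;
(b) there is `δ > 0` with `x_i ≥ δ · Tr x` for all `x ∈ 𝒞` and all `i`;
(c) `(ℝ_{>0})^n ∖ ⋃_w w𝒞` is contained in the union of the hyperplanes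
`{Tr(wx) = Tr(w'x)}`, `w ≠ w'` in `V`, and hence has Lebesgue measure zero. -/
theorem shintani_fundamental_cone_properties
    (n : ℕ) (hn : 2 ≤ n)
    (v : (Fin (n - 1) → ℤ) → (Fin n → ℝ))
    (hpos : ∀ k i, 0 < v k i)
    (hmul : ∀ k l, v (k + l) = v k * v l)
    (htrace : ∀ k, ∑ i, Real.log (v k i) = 0)
    (hind : LinearIndependent ℝ
      (fun j : Fin (n - 1) => fun i : Fin n => Real.log (v (Pi.single j 1) i)))
    (C : Set (Fin n → ℝ))
    (hC : C = {x : Fin n → ℝ | (∀ i, 0 < x i) ∧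
      ∀ k : Fin (n - 1) → ℤ, k ≠ 0 → ∑ i, x i < ∑ i, v k i * x i}) :
    (∀ k k' : Fin (n - 1) → ℤ, k ≠ k' →
      Disjoint ((fun x : Fin n → ℝ => fun i => v k i * x i) '' C)
        ((fun x : Fin n → ℝ => fun i => v k' i * x i) '' C)) ∧
    (∃ δ : ℝ, 0 < δ ∧ ∀ x ∈ C, ∀ i, δ * ∑ j, x j ≤ x i) ∧
    ({x : Fin n → ℝ | ∀ i, 0 < x i} \
        ⋃ k : Fin (n - 1) → ℤ, (fun x : Fin n → ℝ => fun i => v k i * x i) '' C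
      ⊆ ⋃ (k : Fin (n - 1) → ℤ) (k' : Fin (n - 1) → ℤ) (_ : k ≠ k'),
          {x : Fin n → ℝ | ∑ i, v k i * x i = ∑ i, v k' i * x i}) ∧
    MeasureTheory.volume ({x : Fin n → ℝ | ∀ i, 0 < x i} \
        ⋃ k : Fin (n - 1) → ℤ, (fun x : Fin n → ℝ => fun i => v k i * x i) '' C) = 0 := by
  classical
  haveI : Nonempty (Fin n) := ⟨⟨0, by omega⟩⟩
  have hv0 : v 0 = 1 := by
    funext i
    have h := congrFun (hmul 0 0) i
    simp only [add_zero, Pi.mul_apply] at h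
    have hp := hpos 0 i
    show v 0 i = 1
    nlinarith
  have hvv : ∀ k l i, v k i * v l i = v (k + l) i :=
    fun k l i => (congrFun (hmul k l) i).symm
  set w : Fin (n - 1) → (Fin n → ℝ) :=
    fun j => fun i => Real.log (v (Pi.single j 1) i) with hw
  set L : (Fin (n - 1) → ℤ) → (Fin n → ℝ) := fun k i => Real.log (v k i) with hL
  have Ladd : ∀ k l, L (k + l) = L k + L l := by
    intro k l; funext i
    show Real.log (v (k + l) i) = Real.log (v k i) + Real.log (v l i)
    rw [hmul]
    exact Real.log_mul (hpos k i).ne' (hpos l i).ne'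
  set Lhom : (Fin (n - 1) → ℤ) →+ (Fin n → ℝ) := AddMonoidHom.mk' L Ladd with hLhom
  have Lrep : ∀ k, L k = ∑ j, ((k j : ℝ)) • w j := by
    intro k
    have h1 : k = ∑ j, (k j) • Pi.single j (1:ℤ) := by
      conv_lhs => rw [← Finset.univ_sum_single k]
      exact Finset.sum_congr rfl fun j _ => by rw [← Pi.single_smul]; simp
    calc L k = Lhom (∑ j, (k j) • Pi.single j (1:ℤ)) := by rw [← h1]; rfl
      _ = ∑ j, ((k j : ℝ)) • w j := by
          rw [map_sum]
          refine Finset.sum_congr rfl fun j _ => ?_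
          rw [map_zsmul, Int.cast_smul_eq_zsmul ℝ]
          rfl
  have Linj : Function.Injective L := by
    intro k k' h
    have h2 : L (k - k') = 0 := by
      have h0 := Ladd (k - k') k'
      rw [sub_add_cancel, h] at h0
      funext i
      have h3 := congrFun h0.symm i
      simp only [Pi.add_apply, Pi.zero_apply] at h3 ⊢
      linarith
    rw [Lrep] at h2
    have h4 := Fintype.linearIndependent_iff.mp hind (fun j => ((k - k') j : ℝ)) h2
    funext j
    have h5 := h4 j
    simp only [Pi.sub_apply, Int.cast_sub] at h5
    have h6 : (k j : ℝ) = k' j := by linarith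
    exact_mod_cast h6
  -- Part (a)
  have parta : ∀ k k' : Fin (n - 1) → ℤ, k ≠ k' →
      Disjoint ((fun x : Fin n → ℝ => fun i => v k i * x i) '' C)
        ((fun x : Fin n → ℝ => fun i => v k' i * x i) '' C) := by
    intro k k' hkk'
    rw [Set.disjoint_left]
    rintro a ⟨x, hx, rfl⟩ ⟨y, hy, hxy⟩
    rw [hC] at hx hy
    obtain ⟨hxpos, hxlt⟩ := hx
    obtain ⟨hypos, hylt⟩ := hy
    have key : ∀ i, y i = v (k - k') i * x i := by
      intro i
      have h1 : v (k - k') i * v k' i = v k i := by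
        rw [hvv]; congr 2; abel
      have h2 : v k' i * y i = v k i * x i := congrFun hxy i
      have h3 := hpos k' i
      have h4 : v k' i * y i = v k' i * (v (k - k') i * x i) := by
        rw [h2, ← h1]; ring
      exact mul_left_cancel₀ h3.ne' h4
    have hxy1 := hxlt (k - k') (sub_ne_zero.mpr hkk')
    have hyx1 := hylt (k' - k) (sub_ne_zero.mpr (Ne.symm hkk'))
    have e1 : ∑ i, v (k - k') i * x i = ∑ i, y i :=
      Finset.sum_congr rfl fun i _ => (key i).symm
    have e2 : ∑ i, v (k' - k) i * y i = ∑ i, x i := by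
      refine Finset.sum_congr rfl fun i _ => ?_
      rw [key i, ← mul_assoc, hvv]
      have h5 : k' - k + (k - k') = 0 := by abel
      rw [h5]
      have h6 := congrFun hv0 i
      simp only [Pi.one_apply] at h6
      rw [h6, one_mul]
    rw [e1] at hxy1
    rw [e2] at hyx1
    linarith
  -- trace functional and span fact
  set φ : (Fin n → ℝ) →ₗ[ℝ] ℝ :=
    { toFun := fun x => ∑ i, x i
      map_add' := fun a b => by simp [Finset.sum_add_distrib]
      map_smul' := fun r a => by simp [Finset.mul_sum] } with hφ
  have hspan : Submodule.span ℝ (Set.range w) = LinearMap.ker φ := by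
    have hle : Submodule.span ℝ (Set.range w) ≤ LinearMap.ker φ := by
      rw [Submodule.span_le]
      rintro _ ⟨j, rfl⟩
      exact htrace (Pi.single j 1)
    have h1 : Module.finrank ℝ (Submodule.span ℝ (Set.range w)) = n - 1 := by
      rw [finrank_span_eq_card hind, Fintype.card_fin]
    have h2 : Module.finrank ℝ (LinearMap.ker φ) = n - 1 := by
      have hr : LinearMap.range φ = ⊤ := by
        rw [LinearMap.range_eq_top]
        intro r
        refine ⟨fun _ => r / n, ?_⟩
        show ∑ _i : Fin n, r / n = r
        rw [Finset.sum_const, Finset.card_univ, Fintype.card_fin, nsmul_eq_mul]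
        field_simp
      have h3 := LinearMap.finrank_range_add_finrank_ker φ
      rw [hr] at h3
      rw [finrank_top, Module.finrank_self, Module.finrank_pi, Fintype.card_fin] at h3
      omega
    exact Submodule.eq_of_le_of_finrank_le hle (by rw [h1, h2])
  have hrep : ∀ t : Fin n → ℝ, ∑ i, t i = 0 →
      ∃ c : Fin (n - 1) → ℝ, ∑ j, c j • w j = t := by
    intro t ht
    have h1 : t ∈ LinearMap.ker φ := ht
    rw [← hspan] at h1
    exact (Submodule.mem_span_range_iff_exists_fun ℝ).mp h1
  -- Part (b): special units
  have hunit : ∀ i₀ : Fin n, ∃ k : Fin (n - 1) → ℤ,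
      k ≠ 0 ∧ ∀ j, j ≠ i₀ → v k j ≤ 1 / 2 := by
    intro i₀
    set t : Fin n → ℝ := fun j => (if j = i₀ then (n : ℝ) else 0) - 1 with ht
    have htsum : ∑ j, t j = 0 := by
      simp [ht, Finset.sum_sub_distrib, Finset.sum_ite_eq', Finset.card_univ]
    obtain ⟨c, hc⟩ := hrep t htsum
    set E : ℝ := ∑ j, ∑ i, |w j i| with hE
    have hEnn : 0 ≤ E := Finset.sum_nonneg fun j _ =>
      Finset.sum_nonneg fun i _ => abs_nonneg _
    obtain ⟨m, hm⟩ := exists_nat_ge (E + 1)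
    set k : Fin (n - 1) → ℤ := fun j => ⌊(m : ℝ) * c j⌋ with hk
    have hLbound : ∀ i, L k i ≤ (m : ℝ) * t i + E := by
      intro i
      have h1 : L k i = ∑ j, (k j : ℝ) * w j i := by
        rw [Lrep]; simp [Finset.sum_apply]
      have h2 : ∑ j, ((m : ℝ) * c j) * w j i = (m : ℝ) * t i := by
        have h3 := congrFun hc i
        simp only [Finset.sum_apply, Pi.smul_apply, smul_eq_mul] at h3
        rw [← h3, Finset.mul_sum]
        exact Finset.sum_congr rfl fun j _ => by ring
      have h3 : L k i - (m : ℝ) * t i = ∑ j, ((k j : ℝ) - (m : ℝ) * c j) * w j i := by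
        rw [h1, ← h2, ← Finset.sum_sub_distrib]
        exact Finset.sum_congr rfl fun j _ => by ring
      have h4 : ∑ j, ((k j : ℝ) - (m : ℝ) * c j) * w j i ≤ E := by
        calc ∑ j, ((k j : ℝ) - (m : ℝ) * c j) * w j i
            ≤ ∑ j, |((k j : ℝ) - (m : ℝ) * c j) * w j i| :=
              Finset.sum_le_sum fun j _ => le_abs_self _
          _ ≤ ∑ j, |w j i| := by
              refine Finset.sum_le_sum fun j _ => ?_
              rw [abs_mul]
              have h5 : |(k j : ℝ) - (m : ℝ) * c j| ≤ 1 := by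
                rw [abs_le]
                constructor
                · have := Int.lt_floor_add_one ((m : ℝ) * c j)
                  simp only [hk]; linarith
                · have := Int.floor_le ((m : ℝ) * c j)
                  simp only [hk]; linarith
              nlinarith [abs_nonneg (w j i), abs_nonneg ((k j : ℝ) - (m : ℝ) * c j)]
          _ ≤ E := by
              rw [hE]
              refine Finset.sum_le_sum fun j _ => ?_
              exact Finset.single_le_sum (f := fun i' => |w j i'|)
                (fun i' _ => abs_nonneg _) (Finset.mem_univ i)
      linarith
    have hsmall : ∀ j, j ≠ i₀ → v k j ≤ 1 / 2 := by
      intro j hj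
      have h6 := hLbound j
      have htj : t j = -1 := by simp [ht, hj]
      rw [htj] at h6
      have h7 : L k j ≤ -1 := by linarith
      have hlog2 : Real.log 2 ≤ 1 := by
        nlinarith [Real.log_le_sub_one_of_pos (by norm_num : (0:ℝ) < 2)]
      have h8 : Real.log (v k j) ≤ Real.log (1 / 2) := by
        rw [one_div, Real.log_inv]
        calc Real.log (v k j) = L k j := rfl
          _ ≤ -1 := h7
          _ ≤ -Real.log 2 := by linarith
      by_contra hcon
      push_neg at hcon
      have h9 := Real.log_le_log (by norm_num : (0:ℝ) < 1/2) hcon.le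
      have h10 : Real.log (v k j) = Real.log (1/2) := le_antisymm h8 h9
      have h11 := Real.log_injOn_pos (Set.mem_Ioi.mpr (hpos k j))
        (Set.mem_Ioi.mpr (by norm_num : (0:ℝ) < 1/2)) h10
      rw [h11] at hcon
      exact lt_irrefl _ hcon
    refine ⟨k, ?_, hsmall⟩
    intro hk0
    haveI : Nontrivial (Fin n) := by
      obtain ⟨n', rfl⟩ : ∃ n', n = n' + 2 := ⟨n - 2, by omega⟩
      exact inferInstance
    obtain ⟨j, hj⟩ := exists_ne i₀
    have := hsmall j hj
    rw [hk0] at this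
    have h12 := congrFun hv0 j
    simp only [Pi.one_apply] at h12
    rw [h12] at this
    norm_num at this
  choose u hu0 hule using hunit
  set δ : ℝ := Finset.univ.inf' Finset.univ_nonempty
    (fun i : Fin n => 1 / (2 * v (u i) i)) with hδ
  have hδpos : 0 < δ := by
    rw [hδ, Finset.lt_inf'_iff]
    intro i _
    have := hpos (u i) i
    positivity
  have partb : ∀ x ∈ C, ∀ i, δ * ∑ j, x j ≤ x i := by
    intro x hx i₀
    rw [hC] at hx
    obtain ⟨hxpos, hxlt⟩ := hx
    have hTr : 0 < ∑ j, x j :=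
      Finset.sum_pos (fun j _ => hxpos j) Finset.univ_nonempty
    have h1 := hxlt (u i₀) (hu0 i₀)
    have hsplit : ∑ i, v (u i₀) i * x i
        = v (u i₀) i₀ * x i₀ + ∑ i ∈ Finset.univ.erase i₀, v (u i₀) i * x i :=
      (Finset.add_sum_erase _ _ (Finset.mem_univ i₀)).symm
    have hsplit2 : ∑ i, x i = x i₀ + ∑ i ∈ Finset.univ.erase i₀, x i :=
      (Finset.add_sum_erase _ _ (Finset.mem_univ i₀)).symm
    have hbound : ∑ i ∈ Finset.univ.erase i₀, v (u i₀) i * x i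
        ≤ ∑ i ∈ Finset.univ.erase i₀, (1/2) * x i := by
      refine Finset.sum_le_sum fun i hi => ?_
      have h2 := hule i₀ i (Finset.ne_of_mem_erase hi)
      nlinarith [hxpos i]
    rw [← Finset.mul_sum] at hbound
    have hvpos := hpos (u i₀) i₀
    have key : (1/2) * ∑ i, x i ≤ v (u i₀) i₀ * x i₀ := by nlinarith [hxpos i₀]
    have hδle : δ ≤ 1 / (2 * v (u i₀) i₀) :=
      Finset.inf'_le _ (Finset.mem_univ i₀)
    have h3 : (1 / (2 * v (u i₀) i₀)) * ∑ j, x j ≤ x i₀ := by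
      rw [div_mul_eq_mul_div, one_mul, div_le_iff₀ (by positivity)]
      nlinarith
    calc δ * ∑ j, x j ≤ (1 / (2 * v (u i₀) i₀)) * ∑ j, x j :=
          mul_le_mul_of_nonneg_right hδle hTr.le
      _ ≤ x i₀ := h3
  -- Part (c)
  have partc : {x : Fin n → ℝ | ∀ i, 0 < x i} \
      (⋃ k : Fin (n - 1) → ℤ, (fun x : Fin n → ℝ => fun i => v k i * x i) '' C)
      ⊆ ⋃ (k : Fin (n - 1) → ℤ) (k' : Fin (n - 1) → ℤ) (_ : k ≠ k'),
          {x : Fin n → ℝ | ∑ i, v k i * x i = ∑ i, v k' i * x i} := by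
    intro x hx
    obtain ⟨hxpos, hxnot⟩ := hx
    by_contra hcon
    have hfne : ∀ k k' : Fin (n - 1) → ℤ, k ≠ k' →
        (∑ i, v k i * x i) ≠ ∑ i, v k' i * x i := by
      intro k k' hkk' heq
      exact hcon (Set.mem_iUnion.mpr ⟨k, Set.mem_iUnion.mpr ⟨k',
        Set.mem_iUnion.mpr ⟨hkk', heq⟩⟩⟩)
    set f : (Fin (n - 1) → ℤ) → ℝ := fun k => ∑ i, v k i * x i with hf
    set xm : ℝ := Finset.univ.inf' Finset.univ_nonempty x with hxm
    have hxmpos : 0 < xm := by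
      rw [hxm, Finset.lt_inf'_iff]
      exact fun i _ => hxpos i
    have hxmle : ∀ i, xm ≤ x i := fun i => Finset.inf'_le _ (Finset.mem_univ i)
    have hfpos : ∀ k, 0 < f k := fun k =>
      Finset.sum_pos (fun i _ => mul_pos (hpos k i) (hxpos i)) Finset.univ_nonempty
    set R0 : ℝ := Real.log (f 0 / xm) with hR0
    set R : ℝ := (n : ℝ) * (|R0| + 1) with hR
    have hnR : (2 : ℝ) ≤ n := by exact_mod_cast hn
    have hRnn : 0 ≤ R := by positivity
    have hbound : ∀ k, f k ≤ f 0 → ∀ i, |L k i| ≤ R := by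
      intro k hk i
      have hup : ∀ i', L k i' ≤ R0 := by
        intro i'
        have hterm : v k i' * x i' ≤ f k :=
          Finset.single_le_sum (f := fun i => v k i * x i)
            (fun j _ => (mul_pos (hpos k j) (hxpos j)).le) (Finset.mem_univ i')
        have h1 : v k i' ≤ f 0 / xm := by
          rw [le_div_iff₀ hxmpos]
          calc v k i' * xm ≤ v k i' * x i' :=
                mul_le_mul_of_nonneg_left (hxmle i') (hpos k i').le
            _ ≤ f k := hterm
            _ ≤ f 0 := hk
        exact Real.log_le_log (hpos k i') h1
      rw [abs_le]
      constructor
      · have hsum : L k i + ∑ j ∈ Finset.univ.erase i, L k j = 0 := by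
          rw [Finset.add_sum_erase _ _ (Finset.mem_univ i)]
          exact htrace k
        have h4 : ∑ j ∈ Finset.univ.erase i, L k j
            ≤ (Finset.univ.erase i).card • R0 :=
          Finset.sum_le_card_nsmul _ _ _ (fun j _ => hup j)
        rw [nsmul_eq_mul] at h4
        have hcard : ((Finset.univ.erase i).card : ℝ) ≤ n := by
          have : (Finset.univ.erase i).card ≤ n := by
            calc (Finset.univ.erase i).card ≤ Finset.univ.card := Finset.card_erase_le
              _ = n := by rw [Finset.card_univ, Fintype.card_fin]
          exact_mod_cast this
        have hcard0 : (0 : ℝ) ≤ ((Finset.univ.erase i).card : ℝ) := Nat.cast_nonneg _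
        have habs : R0 ≤ |R0| := le_abs_self R0
        have habs0 : 0 ≤ |R0| := abs_nonneg R0
        rw [hR]
        nlinarith [mul_le_mul_of_nonneg_left habs hcard0,
          mul_le_mul_of_nonneg_right hcard habs0]
      · calc L k i ≤ R0 := hup i
          _ ≤ |R0| := le_abs_self R0
          _ ≤ R := by rw [hR]; nlinarith [abs_nonneg R0]
    -- finiteness of the sublevel set
    set T : (Fin (n - 1) → ℝ) →ₗ[ℝ] (Fin n → ℝ) :=
      { toFun := fun c => ∑ j, c j • w j
        map_add' := fun a b => by
          rw [← Finset.sum_add_distrib]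
          exact Finset.sum_congr rfl fun j _ => by
            simp [add_smul]
        map_smul' := fun r a => by
          simp only [RingHom.id_apply, Pi.smul_apply, smul_eq_mul,
            Finset.smul_sum, smul_smul] } with hT
    have hTker : LinearMap.ker T = ⊥ := by
      rw [LinearMap.ker_eq_bot']
      intro c hc
      exact funext fun j => Fintype.linearIndependent_iff.mp hind c hc j
    have hemb := LinearMap.isClosedEmbedding_of_injective hTker
    have hcomp : IsCompact (T ⁻¹' Metric.closedBall 0 R) :=
      hemb.isCompact_preimage (isCompact_closedBall 0 R)
    obtain ⟨B, hB⟩ := isBounded_iff_forall_norm_le.mp hcomp.isBounded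
    set S : Set (Fin (n - 1) → ℤ) := {k | f k ≤ f 0} with hS
    have hSsub : S ⊆ {k : Fin (n - 1) → ℤ | ∀ j, k j ∈ Finset.Icc (-⌊B⌋) ⌊B⌋} := by
      intro k hk j
      have h1 := hbound k hk
      have h2 : T (fun j => (k j : ℝ)) = L k := (Lrep k).symm
      have h3 : (fun j => (k j : ℝ)) ∈ T ⁻¹' Metric.closedBall 0 R := by
        rw [Set.mem_preimage, mem_closedBall_zero_iff, h2]
        rw [pi_norm_le_iff_of_nonneg hRnn]
        intro i
        rw [Real.norm_eq_abs]
        exact h1 i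
      have h4 := hB _ h3
      have h5 : |(k j : ℝ)| ≤ B :=
        le_trans (by simpa using norm_le_pi_norm (fun j => (k j : ℝ)) j) h4
      have h6 : |k j| ≤ ⌊B⌋ := by
        rw [Int.le_floor]
        exact_mod_cast h5
      rw [Finset.mem_Icc]
      rw [abs_le] at h6
      exact ⟨h6.1, h6.2⟩
    have hSfin : S.Finite := by
      refine Set.Finite.subset (Set.Finite.pi
        (fun j : Fin (n - 1) => (Finset.Icc (-⌊B⌋) ⌊B⌋).finite_toSet)) ?_
        |>.subset hSsub
      intro k hk
      rw [Set.mem_pi]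
      intro j _
      exact hk j
    obtain ⟨k0, hk0S, hk0min⟩ := Set.exists_min_image S f hSfin ⟨0, le_refl (f 0)⟩
    have hstrict : ∀ k, k ≠ k0 → f k0 < f k := by
      intro k hk
      rcases le_or_gt (f k) (f 0) with h | h
      · exact lt_of_le_of_ne (hk0min k h) (hfne k0 k (Ne.symm hk))
      · exact lt_of_le_of_lt (hk0min 0 (show (0 : Fin (n - 1) → ℤ) ∈ S from le_refl (f 0))) h
    apply hxnot
    rw [Set.mem_iUnion]
    refine ⟨-k0, fun i => v k0 i * x i, ?_, ?_⟩
    · rw [hC]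
      refine ⟨fun i => mul_pos (hpos k0 i) (hxpos i), ?_⟩
      intro m hm
      have h2 : ∑ i, v m i * (v k0 i * x i) = f (m + k0) := by
        refine Finset.sum_congr rfl fun i _ => ?_
        rw [← mul_assoc, hvv]
      show ∑ i, v k0 i * x i < ∑ i, v m i * (v k0 i * x i)
      rw [h2]
      refine hstrict (m + k0) ?_
      intro h
      apply hm
      have h3 : m + k0 = 0 + k0 := by rw [h, zero_add]
      exact add_right_cancel h3
    · funext i
      show v (-k0) i * (v k0 i * x i) = x i
      rw [← mul_assoc, hvv, neg_add_cancel]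
      have h6 := congrFun hv0 i
      simp only [Pi.one_apply] at h6
      rw [h6, one_mul]
  -- measure zero
  have hplane : ∀ (k k' : Fin (n - 1) → ℤ), k ≠ k' →
      MeasureTheory.volume {x : Fin n → ℝ | ∑ i, v k i * x i = ∑ i, v k' i * x i} = 0 := by
    intro k k' hkk'
    obtain ⟨i₀, hi₀⟩ : ∃ i, v k i ≠ v k' i := by
      by_contra h
      push_neg at h
      refine hkk' (Linj (funext fun i => ?_))
      show Real.log (v k i) = Real.log (v k' i)
      rw [h i]
    set ψ : (Fin n → ℝ) →ₗ[ℝ] ℝ :=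
      { toFun := fun x => ∑ i, (v k i - v k' i) * x i
        map_add' := fun a b => by
          simp only [Pi.add_apply, mul_add]
          rw [Finset.sum_add_distrib]
        map_smul' := fun r a => by
          simp only [Pi.smul_apply, smul_eq_mul, RingHom.id_apply]
          rw [Finset.mul_sum]
          exact Finset.sum_congr rfl fun i _ => by ring } with hψ
    have hset : {x : Fin n → ℝ | ∑ i, v k i * x i = ∑ i, v k' i * x i}
        = ↑(LinearMap.ker ψ) := by
      ext x
      simp only [Set.mem_setOf_eq, SetLike.mem_coe, LinearMap.mem_ker]
      show (∑ i, v k i * x i = ∑ i, v k' i * x i) ↔ ∑ i, (v k i - v k' i) * x i = 0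
      rw [Finset.sum_congr rfl (fun i _ => sub_mul (v k i) (v k' i) (x i)),
        Finset.sum_sub_distrib, sub_eq_zero]
    rw [hset]
    refine MeasureTheory.Measure.addHaar_submodule _ _ ?_
    intro h
    have h2 : Pi.single i₀ (1:ℝ) ∈ LinearMap.ker ψ := h ▸ Submodule.mem_top
    rw [LinearMap.mem_ker] at h2
    have h3 : ψ (Pi.single i₀ (1:ℝ)) = v k i₀ - v k' i₀ := by
      rw [hψ]
      simp only [LinearMap.coe_mk, AddHom.coe_mk]
      rw [Finset.sum_eq_single i₀]
      · simp
      · intro b _ hb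
        simp [Pi.single_apply, hb]
      · intro hb
        exact absurd (Finset.mem_univ i₀) hb
    rw [h3] at h2
    exact hi₀ (sub_eq_zero.mp h2)
  refine ⟨parta, ⟨δ, hδpos, partb⟩, partc, ?_⟩
  refine MeasureTheory.measure_mono_null partc ?_
  refine MeasureTheory.measure_iUnion_null fun k => ?_
  refine MeasureTheory.measure_iUnion_null fun k' => ?_
  refine MeasureTheory.measure_iUnion_null fun h => ?_
  exact hplane k k' h
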